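/- If x_1, ..., x_i are pairwise commuting elements of a group G, then the bar-complex chain ⟨x_1,...,x_i⟩ := [x_1] ∧ [x_2] ∧ ... ∧ [x_i] (iterated shuffle product) is a cycle, and the homology class it represents in H_i(G;k) is i-linear and skew-symmetric in x_1,...,x_i. -/

import Mathlib

open scoped Classical

open Finsupp

/-- Chains of the (normalized) bar complex of `G` over `k`: the free `k`-module
on lists of elements of `G`. -/
abbrev BarChain (G : Type*) [Group G] (k : Type*) [CommRing k] := List G →₀ k

variable {G : Type*} [Group G] {k : Type*} [CommRing k]

/-- The normalized bar symbol `[x₁|...|x_s]`: zero if some entry equals `1`. -/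
noncomputable def barSym (l : List G) : BarChain G k :=
  if (1 : G) ∈ l then 0 else Finsupp.single l 1

/-- Normalization map, killing all basis lists containing `1`. -/
noncomputable def barNorm : BarChain G k →ₗ[k] BarChain G k :=
  Finsupp.lsum k fun l => LinearMap.toSpanSingleton k _ (barSym l)

/-- Merge the `j`-th and `(j+1)`-st entries of a list by multiplying them. -/
def mergeAt (l : List G) (j : ℕ) : List G :=
  l.take j ++ [l.getD j 1 * l.getD (j+1) 1] ++ l.drop (j+2)

/-- The boundary of a bar symbol (normalized convention: symbols with an entry
equal to `1` are zero). -/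
noncomputable def barDList (l : List G) : BarChain G k :=
  if l = [] then 0 else
    barSym l.tail
      + ∑ j ∈ Finset.range (l.length - 1), ((-1 : k)^(j+1)) • barSym (mergeAt l j)
      + ((-1 : k)^l.length) • barSym l.dropLast

/-- The boundary operator of the normalized bar complex. -/
noncomputable def barD : BarChain G k →ₗ[k] BarChain G k :=
  Finsupp.lsum k fun l => LinearMap.toSpanSingleton k _ (barDList l)

/-- The (signed) shuffle of two lists. -/
noncomputable def shuffleList : List G → List G → BarChain G k
  | [], l => Finsupp.single l 1
  | l, [] => Finsupp.single l 1
  | x :: xs, y :: ys =>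
      Finsupp.mapDomain (x :: ·) (shuffleList xs (y :: ys))
        + ((-1 : k)^(xs.length + 1)) • Finsupp.mapDomain (y :: ·) (shuffleList (x :: xs) ys)
  termination_by l1 l2 => l1.length + l2.length

/-- The bilinear shuffle product on bar chains. -/
noncomputable def barSh : BarChain G k →ₗ[k] BarChain G k →ₗ[k] BarChain G k :=
  Finsupp.lsum k fun l1 => LinearMap.toSpanSingleton k _
    ((Finsupp.lsum k fun l2 => LinearMap.toSpanSingleton k _ (shuffleList l1 l2) :
      BarChain G k →ₗ[k] BarChain G k))

/-- The shuffle product in the normalized bar complex. -/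
noncomputable def barNSh (a b : BarChain G k) : BarChain G k :=
  barNorm (barSh a b)

/-- The chain `[ζ]^(s) = Σ_{i₁,...,i_s = 1}^{ℓ-1} [ζ^{i₁}|ζ|...|ζ^{i_s}|ζ]`. -/
noncomputable def zetaChain (ℓ : ℕ) (ζ : G) (s : ℕ) : BarChain G k :=
  ∑ f : Fin s → Fin (ℓ - 1),
    barSym ((List.ofFn (fun j => [ζ ^ ((f j : ℕ) + 1), ζ])).flatten)

/-- The iterated shuffle product `⟨x₁,...,x_i⟩ = [x₁] ∧ ... ∧ [x_i]`. -/
noncomputable def wedgeList (l : List G) : BarChain G k :=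
  l.foldr (fun g acc => barNSh (barSym [g]) acc) (barSym [])

section Aux

lemma barNorm_single (l : List G) (c : k) : barNorm (Finsupp.single l c) = c • barSym l := by
  simp [barNorm]

lemma barD_single (l : List G) (c : k) : barD (Finsupp.single l c) = c • barDList l := by
  simp [barD]

lemma barSh_single (l1 l2 : List G) (c d : k) :
    barSh (Finsupp.single l1 c) (Finsupp.single l2 d) = (c * d) • shuffleList l1 l2 := by
  simp [barSh, smul_smul]

lemma barSym_of_mem (l : List G) (h : (1:G) ∈ l) : (barSym l : BarChain G k) = 0 := by
  simp [barSym, h]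

lemma barSym_of_not_mem (l : List G) (h : (1:G) ∉ l) :
    (barSym l : BarChain G k) = Finsupp.single l 1 := by
  simp [barSym, h]

lemma barDList_nil : (barDList ([] : List G) : BarChain G k) = 0 := by simp [barDList]

lemma barDList_one (x : G) : (barDList [x] : BarChain G k) = 0 := by
  simp [barDList, barSym]

lemma barD_barSym (l : List G) (h : (1:G) ∉ l) :
    barD (barSym l : BarChain G k) = barDList l := by
  rw [barSym_of_not_mem l h, barD_single, one_smul]

lemma barDList_pair (a b : G) :
    (barDList [a, b] : BarChain G k) = barSym [b] - barSym [a*b] + barSym [a] := by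
  simp [barDList, mergeAt]
  abel

/-- cons-and-normalize operator -/
noncomputable def consS (g : G) : BarChain G k →ₗ[k] BarChain G k :=
  Finsupp.lsum k fun n => LinearMap.toSpanSingleton k _ (barSym (g :: n))

/-- tail operator -/
noncomputable def tlS : BarChain G k →ₗ[k] BarChain G k :=
  Finsupp.lsum k fun n => LinearMap.toSpanSingleton k _ (barSym n.tail)

/-- fuse-head operator: `n ↦ [y·n₀ | n₁ | ...]` -/
noncomputable def fuS (y : G) : BarChain G k →ₗ[k] BarChain G k :=
  Finsupp.lsum k fun n => LinearMap.toSpanSingleton k _ (barSym (mergeAt (y :: n) 0))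

/-- insertion (shuffle with a single letter) operator -/
noncomputable def J (g : G) : BarChain G k →ₗ[k] BarChain G k := barSh (barSym [g])

lemma consS_single (g : G) (n : List G) (c : k) :
    consS g (Finsupp.single n c) = c • barSym (g :: n) := by simp [consS]

lemma tlS_single (n : List G) (c : k) :
    (tlS (Finsupp.single n c) : BarChain G k) = c • barSym n.tail := by simp [tlS]

lemma fuS_single (y : G) (n : List G) (c : k) :
    fuS y (Finsupp.single n c) = c • barSym (mergeAt (y :: n) 0) := by simp [fuS]

lemma consS_barSym (g : G) (n : List G) :
    consS g (barSym n : BarChain G k) = barSym (g :: n) := by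
  by_cases h : (1:G) ∈ n
  · rw [barSym_of_mem n h, map_zero, barSym_of_mem]
    exact List.mem_cons_of_mem _ h
  · rw [barSym_of_not_mem n h, consS_single, one_smul]

lemma tlS_barSym (n : List G) (h : (1:G) ∉ n) :
    (tlS (barSym n) : BarChain G k) = barSym n.tail := by
  rw [barSym_of_not_mem n h, tlS_single, one_smul]

lemma fuS_barSym (y : G) (n : List G) (h : (1:G) ∉ n) :
    fuS y (barSym n : BarChain G k) = barSym (mergeAt (y :: n) 0) := by
  rw [barSym_of_not_mem n h, fuS_single, one_smul]

/-- span of normalized symbols with lists in `S` -/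
noncomputable def SymOn (S : Set (List G)) : Submodule k (BarChain G k) :=
  Submodule.span k ((fun n => (barSym n : BarChain G k)) '' S)

lemma barSym_mem_symOn {S : Set (List G)} {n : List G} (h : n ∈ S) :
    (barSym n : BarChain G k) ∈ SymOn (k := k) S :=
  Submodule.subset_span ⟨n, h, rfl⟩

lemma barSym_mem_symOn' {S : Set (List G)} (n : List G)
    (h : (1:G) ∉ n → n ∈ S) : (barSym n : BarChain G k) ∈ SymOn (k := k) S := by
  by_cases h1 : (1:G) ∈ n
  · rw [barSym_of_mem n h1]; exact Submodule.zero_mem _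
  · exact barSym_mem_symOn (h h1)

lemma symOn_mono {S T : Set (List G)} (h : S ⊆ T) :
    SymOn (k := k) S ≤ SymOn (k := k) T :=
  Submodule.span_mono (Set.image_mono h)

lemma symOn_ext {S : Set (List G)} (F F' : BarChain G k →ₗ[k] BarChain G k)
    (h : ∀ n ∈ S, F (barSym n) = F' (barSym n)) {u : BarChain G k}
    (hu : u ∈ SymOn (k := k) S) : F u = F' u := by
  have hle : SymOn (k := k) S ≤ LinearMap.eqLocus F F' := by
    rw [SymOn, Submodule.span_le]
    rintro _ ⟨n, hn, rfl⟩
    exact h n hn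
  exact hle hu

lemma symOn_map_le {S T : Set (List G)} (F : BarChain G k →ₗ[k] BarChain G k)
    (h : ∀ n ∈ S, F (barSym n) ∈ SymOn (k := k) T) {u : BarChain G k}
    (hu : u ∈ SymOn (k := k) S) : F u ∈ SymOn (k := k) T := by
  have hle : SymOn (k := k) S ≤ (SymOn (k := k) T).comap F := by
    rw [SymOn, Submodule.span_le]
    rintro _ ⟨n, hn, rfl⟩
    exact h n hn
  exact hle hu

lemma consS_mem {S : Set (List G)} (g : G) {u : BarChain G k}
    (hu : u ∈ SymOn (k := k) S) : consS g u ∈ SymOn (k := k) ((g :: ·) '' S) :=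
  symOn_map_le _ (fun n hn => by
    rw [consS_barSym]; exact barSym_mem_symOn ⟨n, hn, rfl⟩) hu

lemma barNorm_eq_self {u : BarChain G k} (hu : u ∈ SymOn (k := k) Set.univ) :
    barNorm u = u :=
  symOn_ext barNorm LinearMap.id
    (fun n _ => by
      by_cases h : (1:G) ∈ n
      · rw [barSym_of_mem n h]; simp
      · rw [barSym_of_not_mem n h]; simp [barNorm_single, barSym_of_not_mem n h]) hu

lemma consS_one {u : BarChain G k} (hu : u ∈ SymOn (k := k) Set.univ) :
    consS (1:G) u = 0 :=
  symOn_ext (consS 1) 0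
    (fun n _ => by rw [consS_barSym, barSym_of_mem _ (List.mem_cons_self)]; simp) hu

lemma mapDomain_eq_consS {z : G} (hz : z ≠ 1) {u : BarChain G k}
    (hu : u ∈ SymOn (k := k) Set.univ) :
    Finsupp.mapDomain (z :: ·) u = consS z u := by
  have := symOn_ext (Finsupp.lmapDomain k k (z :: ·)) (consS z)
    (fun n _ => by
      by_cases h : (1:G) ∈ n
      · rw [barSym_of_mem n h]; simp
      · rw [barSym_of_not_mem n h]
        simp only [Finsupp.lmapDomain_apply, Finsupp.mapDomain_single, consS_single, one_smul]
        rw [barSym_of_not_mem _ (by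
          simp only [List.mem_cons, not_or]
          exact ⟨Ne.symm hz, h⟩)]) hu
  simpa using this


lemma shuffleList_nil_left (l : List G) :
    (shuffleList [] l : BarChain G k) = Finsupp.single l 1 := by rw [shuffleList]

lemma shuffleList_nil_right (l : List G) :
    (shuffleList l [] : BarChain G k) = Finsupp.single l 1 := by
  cases l <;> rw [shuffleList] <;> simp

lemma shuffleList_cons_cons (x y : G) (xs ys : List G) :
    (shuffleList (x::xs) (y::ys) : BarChain G k) =
      Finsupp.mapDomain (x :: ·) (shuffleList xs (y :: ys))
        + ((-1 : k)^(xs.length + 1)) • Finsupp.mapDomain (y :: ·) (shuffleList (x :: xs) ys) := by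
  rw [shuffleList]


lemma J_one : (J (1:G) : BarChain G k →ₗ[k] BarChain G k) = 0 := by
  unfold J
  rw [barSym_of_mem _ (List.mem_singleton_self _), map_zero]

lemma not_one_mem_singleton {g : G} (hg : g ≠ 1) : (1:G) ∉ [g] := by
  simp [Ne.symm hg]

lemma J_barSym {g : G} (hg : g ≠ 1) {n : List G} (hn : (1:G) ∉ n) :
    (J g (barSym n) : BarChain G k) = shuffleList [g] n := by
  unfold J
  rw [barSym_of_not_mem _ (not_one_mem_singleton hg), barSym_of_not_mem n hn,
    barSh_single, one_mul, one_smul]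

lemma J_nil (g : G) : (J g (barSym []) : BarChain G k) = barSym [g] := by
  by_cases hg : g = 1
  · subst hg
    rw [J_one, barSym_of_mem _ (List.mem_singleton_self _)]
    rfl
  · rw [J_barSym hg (by simp), shuffleList_nil_right,
      barSym_of_not_mem _ (not_one_mem_singleton hg)]

lemma mergeAt_cons_zero (y a : G) (t : List G) : mergeAt (y::a::t) 0 = (y*a)::t := by
  simp [mergeAt]

lemma mergeAt_cons_succ (y : G) (n : List G) (j : ℕ) :
    mergeAt (y::n) (j+1) = y :: mergeAt n j := by
  simp [mergeAt]

lemma barDList_mem (n : List G) : (barDList n : BarChain G k) ∈ SymOn (k := k) Set.univ := by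
  unfold barDList
  split
  · exact Submodule.zero_mem _
  · refine Submodule.add_mem _ (Submodule.add_mem _ ?_ ?_) ?_
    · exact barSym_mem_symOn (Set.mem_univ _)
    · exact Submodule.sum_mem _ (fun j _ =>
        Submodule.smul_mem _ _ (barSym_mem_symOn (Set.mem_univ _)))
    · exact Submodule.smul_mem _ _ (barSym_mem_symOn (Set.mem_univ _))

lemma mem_univ_barSym (n : List G) : (barSym n : BarChain G k) ∈ SymOn (k := k) Set.univ :=
  barSym_mem_symOn (Set.mem_univ _)

/-- honest recursion case for `J` -/
lemma J_rec_aux {g z : G} {zs : List G} (hg : g ≠ 1) (h1 : (1:G) ∉ z::zs)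
    (hmem : (J g (barSym zs) : BarChain G k) ∈ SymOn (k := k) Set.univ) :
    (J g (barSym (z::zs)) : BarChain G k)
      = barSym (g::z::zs) - consS z (J g (barSym zs)) := by
  have hz : z ≠ 1 := fun h => h1 (by rw [h]; exact List.mem_cons_self)
  have hzs : (1:G) ∉ zs := fun h => h1 (List.mem_cons_of_mem _ h)
  rw [J_barSym hg h1, shuffleList_cons_cons, shuffleList_nil_left]
  rw [Finsupp.mapDomain_single]
  rw [← J_barSym hg hzs]
  rw [mapDomain_eq_consS hz hmem]
  have hgm : (1:G) ∉ g::z::zs := by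
    intro hm
    rcases List.mem_cons.1 hm with h | h
    · exact hg h.symm
    · exact h1 h
  rw [barSym_of_not_mem _ hgm]
  simp [sub_eq_add_neg]

lemma J_mem_full (g : G) (E : Set G) : ∀ (n : List G), (∀ z ∈ n, z ∈ E) →
    (J g (barSym n) : BarChain G k) ∈
      SymOn (k := k) {m | m ≠ [] ∧ ∀ z ∈ m, z ∈ insert g E} := by
  intro n
  induction n with
  | nil =>
    intro _
    rw [J_nil]
    exact barSym_mem_symOn' _ (fun _ => ⟨by simp, by simp⟩)
  | cons z zs ih =>
    intro hE
    by_cases hg : g = 1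
    · subst hg; rw [J_one]; exact Submodule.zero_mem _
    by_cases h1 : (1:G) ∈ z::zs
    · rw [barSym_of_mem _ h1, map_zero]; exact Submodule.zero_mem _
    have hzsE : ∀ x ∈ zs, x ∈ E := fun x hx => hE x (List.mem_cons_of_mem _ hx)
    have ihm := ih hzsE
    have ihu : (J g (barSym zs) : BarChain G k) ∈ SymOn (k := k) Set.univ :=
      symOn_mono (by intro m _; trivial) ihm
    rw [J_rec_aux hg h1 ihu]
    refine Submodule.sub_mem _ ?_ ?_
    · refine barSym_mem_symOn' _ (fun _ => ⟨by simp, ?_⟩)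
      intro x hx
      rcases List.mem_cons.1 hx with h | h
      · exact h ▸ Set.mem_insert _ _
      · exact Set.mem_insert_iff.2 (Or.inr (hE x h))
    · refine symOn_mono ?_ (consS_mem z ihm)
      rintro _ ⟨m, hm, rfl⟩
      refine ⟨by simp, ?_⟩
      intro x hx
      rcases List.mem_cons.1 hx with h | h
      · exact h ▸ Set.mem_insert_iff.2 (Or.inr (hE z (List.mem_cons_self)))
      · exact hm.2 x h

lemma J_mem_univ' (g : G) (n : List G) :
    (J g (barSym n) : BarChain G k) ∈ SymOn (k := k) Set.univ :=
  symOn_mono (by intro m _; trivial) (J_mem_full g Set.univ n (fun _ _ => trivial))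

lemma J_mem_ne (g : G) (n : List G) :
    (J g (barSym n) : BarChain G k) ∈ SymOn (k := k) {m : List G | m ≠ []} :=
  symOn_mono (by intro m hm; exact hm.1) (J_mem_full g Set.univ n (fun _ _ => trivial))

lemma J_rec (g z : G) (zs : List G) :
    (J g (barSym (z::zs)) : BarChain G k)
      = consS g (barSym (z::zs)) - consS z (J g (barSym zs)) := by
  by_cases hg : g = 1
  · subst hg
    rw [J_one, consS_barSym, barSym_of_mem _ (List.mem_cons_self)]
    simp
  by_cases h1 : (1:G) ∈ z::zs
  · rcases List.mem_cons.1 h1 with h | h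
    · subst h
      rw [barSym_of_mem _ (List.mem_cons_self), map_zero, map_zero,
        consS_one (J_mem_univ' g zs)]
      simp
    · rw [barSym_of_mem _ (List.mem_cons_of_mem _ h), barSym_of_mem _ h]
      simp
  · rw [J_rec_aux hg h1 (J_mem_univ' g zs), consS_barSym]

lemma J_rec_E (g z : G) {u : BarChain G k} (hu : u ∈ SymOn (k := k) Set.univ) :
    J g (consS z u) = consS g (consS z u) - consS z (J g u) := by
  have := symOn_ext ((J g).comp (consS z))
    ((consS g).comp (consS z) - (consS z).comp (J g))
    (fun n _ => by
      simp only [LinearMap.comp_apply, LinearMap.sub_apply]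
      rw [consS_barSym, J_rec]) hu
  simpa using this

lemma tlS_consS {g : G} (hg : g ≠ 1) {u : BarChain G k}
    (hu : u ∈ SymOn (k := k) Set.univ) : tlS (consS g u) = u := by
  have := symOn_ext (tlS.comp (consS g)) LinearMap.id
    (fun n _ => by
      simp only [LinearMap.comp_apply, LinearMap.id_apply]
      rw [consS_barSym]
      by_cases h : (1:G) ∈ n
      · rw [barSym_of_mem _ h, barSym_of_mem _ (List.mem_cons_of_mem _ h)]
        exact (map_zero _)
      · rw [tlS_barSym _ (by
          simp only [List.mem_cons, not_or]
          exact ⟨Ne.symm hg, h⟩)]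
        rfl) hu
  simpa using this

lemma fuS_consS {g : G} (hg : g ≠ 1) (z : G) {u : BarChain G k}
    (hu : u ∈ SymOn (k := k) Set.univ) : fuS z (consS g u) = consS (z*g) u := by
  exact symOn_ext ((fuS z).comp (consS g)) ((consS (z*g)))
    (fun n _ => by
      simp only [LinearMap.comp_apply]
      rw [consS_barSym]
      by_cases h : (1:G) ∈ n
      · rw [barSym_of_mem _ h, barSym_of_mem (g::n) (List.mem_cons_of_mem _ h)]
        simp
      · rw [fuS_barSym _ _ (by
          simp only [List.mem_cons, not_or]
          exact ⟨Ne.symm hg, h⟩), mergeAt_cons_zero, ← consS_barSym]) hu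


lemma O1 (y : G) {n : List G} (hn : n ≠ []) :
    (barD (consS y (barSym n)) : BarChain G k) =
      barNorm (barSym n) - fuS y (barSym n) + consS y (tlS (barSym n))
        - consS y (barD (barSym n)) := by
  by_cases h1 : (1:G) ∈ n
  · rw [barSym_of_mem n h1]; simp
  obtain ⟨a, t, rfl⟩ : ∃ a t, n = a :: t := by
    cases n with
    | nil => exact absurd rfl hn
    | cons a t => exact ⟨a, t, rfl⟩
  have ha : a ≠ 1 := fun h => h1 (by rw [h]; exact List.mem_cons_self)
  have ht : (1:G) ∉ t := fun h => h1 (List.mem_cons_of_mem _ h)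
  rw [consS_barSym, barNorm_eq_self (mem_univ_barSym _), tlS_barSym _ h1,
    fuS_barSym _ _ h1, barD_barSym _ h1, List.tail_cons, consS_barSym]
  by_cases hy : y = 1
  · subst hy
    rw [barSym_of_mem (1::a::t) (List.mem_cons_self), map_zero,
      mergeAt_cons_zero, one_mul, barSym_of_mem (1::t) (List.mem_cons_self),
      consS_one (barDList_mem _)]
    abel
  have hy1 : (1:G) ∉ y::a::t := by
    intro hm
    rcases List.mem_cons.1 hm with h | h
    · exact hy h.symm
    · exact h1 h
  rw [barD_barSym _ hy1]
  have key : (barDList (y::a::t) : BarChain G k)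
      = barSym (a::t) - barSym ((y*a)::t)
        + (∑ j ∈ Finset.range t.length, ((-1:k)^(j+2)) • barSym (y :: mergeAt (a::t) j))
        + ((-1:k)^(t.length+2)) • barSym (y :: (a::t).dropLast) := by
    rw [barDList, if_neg (by simp)]
    have hl : (y::a::t).length - 1 = t.length + 1 := by simp
    rw [hl, Finset.sum_range_succ']
    have h0 : ((-1:k)^(0+1)) • (barSym (mergeAt (y::a::t) 0) : BarChain G k)
        = -barSym ((y*a)::t) := by
      rw [mergeAt_cons_zero]; simp
    rw [h0]
    have hs : ∀ j ∈ Finset.range t.length,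
        ((-1:k)^(j+1+1)) • (barSym (mergeAt (y::a::t) (j+1)) : BarChain G k)
          = ((-1:k)^(j+2)) • barSym (y :: mergeAt (a::t) j) := by
      intro j _; rw [mergeAt_cons_succ]
    rw [Finset.sum_congr rfl hs]
    have hd : (y::a::t).dropLast = y :: (a::t).dropLast := rfl
    rw [hd]
    simp only [List.tail_cons, List.length_cons]
    abel
  have key2 : (consS y (barDList (a::t)) : BarChain G k)
      = barSym (y::t)
        + (∑ j ∈ Finset.range t.length, ((-1:k)^(j+1)) • barSym (y :: mergeAt (a::t) j))
        + ((-1:k)^(t.length+1)) • barSym (y :: (a::t).dropLast) := by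
    rw [barDList, if_neg (by simp)]
    simp only [map_add, map_smul, map_sum, consS_barSym, List.tail_cons, List.length_cons,
      Nat.add_sub_cancel]
  rw [key, key2, mergeAt_cons_zero]
  simp only [pow_succ, pow_zero, one_mul, mul_neg, mul_one, neg_smul, neg_neg,
    Finset.sum_neg_distrib]
  abel


lemma O1E (y : G) {u : BarChain G k} (hu : u ∈ SymOn (k := k) {m : List G | m ≠ []}) :
    barD (consS y u) = barNorm u - fuS y u + consS y (tlS u) - consS y (barD u) := by
  have := symOn_ext (barD.comp (consS y))
    (barNorm - fuS y + (consS y).comp tlS - (consS y).comp barD)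
    (fun n hn => by
      simp only [LinearMap.comp_apply, LinearMap.add_apply, LinearMap.sub_apply]
      exact O1 y hn) hu
  simpa using this

lemma L1 (x : G) : ∀ (m : List G), (∀ z ∈ m, z * x = x * z) →
    (barD (J x (barSym m)) : BarChain G k) = - J x (barD (barSym m)) := by
  intro m
  induction m with
  | nil =>
    intro _
    rw [J_nil, barD_barSym ([] : List G) (by simp), barDList_nil, map_zero, neg_zero]
    by_cases hx : x = 1
    · rw [barSym_of_mem _ (by simp [hx])]; exact map_zero _
    · rw [barD_barSym _ (not_one_mem_singleton hx), barDList_one]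
  | cons z zs ih =>
    intro hc
    by_cases hx : x = 1
    · subst hx; rw [J_one]; simp
    by_cases h1 : (1:G) ∈ z::zs
    · rw [barSym_of_mem _ h1]; simp
    have hz : z ≠ 1 := fun h => h1 (by rw [h]; exact List.mem_cons_self)
    have hzs : (1:G) ∉ zs := fun h => h1 (List.mem_cons_of_mem _ h)
    have hzx : z * x = x * z := hc z (List.mem_cons_self)
    have hczs : ∀ u ∈ zs, u * x = x * u := fun u hu => hc u (List.mem_cons_of_mem _ hu)
    cases zs with
    | nil =>
      have hxz1 : (1:G) ∉ [x, z] := by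
        intro h
        rcases List.mem_cons.1 h with h | h
        · exact hx h.symm
        · exact hz ((List.mem_singleton.1 h).symm)
      have hzx1 : (1:G) ∉ [z, x] := by
        intro h
        rcases List.mem_cons.1 h with h | h
        · exact hz h.symm
        · exact hx ((List.mem_singleton.1 h).symm)
      rw [J_rec x z [], J_nil, consS_barSym, consS_barSym, map_sub,
        barD_barSym _ hxz1, barD_barSym _ hzx1, barDList_pair, barDList_pair,
        barD_barSym _ (not_one_mem_singleton hz), barDList_one, map_zero, neg_zero, hzx]
      abel
    | cons w ws =>
      have hw : w ≠ 1 := fun h => hzs (by rw [h]; exact List.mem_cons_self)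
      have hws : (1:G) ∉ ws := fun h => hzs (List.mem_cons_of_mem _ h)
      have ihe : (barD (J x (barSym (w::ws))) : BarChain G k)
          = -J x (barD (barSym (w::ws))) := ih hczs
      have hDzs_mem : (barD (barSym (w::ws)) : BarChain G k) ∈ SymOn (k := k) Set.univ := by
        rw [barD_barSym _ hzs]; exact barDList_mem _
      have hDm : (barD (barSym (z::w::ws)) : BarChain G k)
          = barSym (w::ws) - barSym ((z*w)::ws) + barSym (z::ws)
            - consS z (barD (barSym (w::ws))) := by
        rw [← consS_barSym z (w::ws), O1 z (by simp)]
        rw [barNorm_eq_self (mem_univ_barSym _), tlS_barSym _ hzs, List.tail_cons,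
          fuS_barSym _ _ hzs, mergeAt_cons_zero, consS_barSym]
      rw [J_rec x z (w::ws), map_sub, O1 x (show (z::w::ws) ≠ [] from by simp),
        O1E z (J_mem_ne x (w::ws))]
      rw [ihe, hDm]
      rw [barNorm_eq_self (mem_univ_barSym (z::w::ws)), tlS_barSym _ h1, List.tail_cons,
        fuS_barSym _ _ h1, mergeAt_cons_zero]
      rw [barNorm_eq_self (J_mem_univ' x (w::ws))]
      simp only [map_sub, map_add, map_neg]
      rw [J_rec x w ws]
      simp only [map_sub, map_add, map_neg]
      rw [fuS_consS hx z (mem_univ_barSym (w::ws)), fuS_consS hw z (J_mem_univ' x ws),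
        tlS_consS hx (mem_univ_barSym (w::ws)), tlS_consS hw (J_mem_univ' x ws),
        J_rec x z ws, J_rec x (z*w) ws, J_rec_E x z hDzs_mem]
      simp only [consS_barSym]
      rw [hzx]
      abel


lemma L1E (x : G) {u : BarChain G k}
    (hu : u ∈ SymOn (k := k) {m : List G | ∀ z ∈ m, z * x = x * z}) :
    barD (J x u) = - J x (barD u) := by
  have h0 := symOn_ext (barD.comp (J x) + (J x).comp barD) 0
    (fun n hn => by
      simp only [LinearMap.comp_apply, LinearMap.add_apply, LinearMap.zero_apply]
      rw [L1 x n hn]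
      abel) hu
  simp only [LinearMap.comp_apply, LinearMap.add_apply, LinearMap.zero_apply] at h0
  exact eq_neg_of_add_eq_zero_left h0

/-- shuffle with `[y, y']` -/
noncomputable def Kop (y y' : G) : BarChain G k →ₗ[k] BarChain G k := barSh (barSym [y, y'])

lemma pair_not_mem {y y' : G} (hy : y ≠ 1) (hy' : y' ≠ 1) : (1:G) ∉ [y, y'] := by
  intro h
  rcases List.mem_cons.1 h with h | h
  · exact hy h.symm
  · exact hy' ((List.mem_singleton.1 h).symm)

lemma Kop_nil {y y' : G} (hy : y ≠ 1) (hy' : y' ≠ 1) :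
    (Kop y y' (barSym []) : BarChain G k) = barSym [y, y'] := by
  unfold Kop
  rw [barSym_of_not_mem _ (pair_not_mem hy hy'), barSym_of_not_mem ([] : List G) (by simp),
    barSh_single, shuffleList_nil_right, one_mul, one_smul,
    ← barSym_of_not_mem _ (pair_not_mem hy hy')]

lemma Kop_rec_aux {y y' z : G} {zs : List G} (hy : y ≠ 1) (hy' : y' ≠ 1)
    (h1 : (1:G) ∉ z::zs)
    (hmem : (Kop y y' (barSym zs) : BarChain G k) ∈ SymOn (k := k) Set.univ) :
    (Kop y y' (barSym (z::zs)) : BarChain G k)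
      = consS y (J y' (barSym (z::zs))) + consS z (Kop y y' (barSym zs)) := by
  have hz : z ≠ 1 := fun h => h1 (by rw [h]; exact List.mem_cons_self)
  have hzs : (1:G) ∉ zs := fun h => h1 (List.mem_cons_of_mem _ h)
  have e1 : (shuffleList [y'] (z::zs) : BarChain G k) = J y' (barSym (z::zs)) :=
    (J_barSym hy' h1).symm
  have e2 : (shuffleList [y, y'] zs : BarChain G k) = Kop y y' (barSym zs) := by
    symm
    unfold Kop
    rw [barSym_of_not_mem _ (pair_not_mem hy hy'), barSym_of_not_mem _ hzs, barSh_single,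
      one_mul, one_smul]
  have main : (Kop y y' (barSym (z::zs)) : BarChain G k)
      = Finsupp.mapDomain (y :: ·) (shuffleList [y'] (z::zs))
        + Finsupp.mapDomain (z :: ·) (shuffleList [y, y'] zs) := by
    unfold Kop
    rw [barSym_of_not_mem _ (pair_not_mem hy hy'), barSym_of_not_mem _ h1, barSh_single,
      one_mul, one_smul, shuffleList_cons_cons]
    norm_num
  rw [main, e1, e2, mapDomain_eq_consS hy (J_mem_univ' y' _), mapDomain_eq_consS hz hmem]

lemma Kop_mem_full {y y' : G} (hy : y ≠ 1) (hy' : y' ≠ 1) (E : Set G) :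
    ∀ (n : List G), (∀ z ∈ n, z ∈ E) →
    (Kop y y' (barSym n) : BarChain G k) ∈
      SymOn (k := k) {m | m ≠ [] ∧ ∀ z ∈ m, z ∈ insert y (insert y' E)} := by
  intro n
  induction n with
  | nil =>
    intro _
    rw [Kop_nil hy hy']
    refine barSym_mem_symOn' _ (fun _ => ⟨by simp, ?_⟩)
    intro x hx
    rcases List.mem_cons.1 hx with h | h
    · exact h ▸ Set.mem_insert _ _
    · exact Set.mem_insert_iff.2 (Or.inr ((List.mem_singleton.1 h) ▸ Set.mem_insert _ _))
  | cons z zs ih =>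
    intro hE
    by_cases h1 : (1:G) ∈ z::zs
    · rw [barSym_of_mem _ h1, map_zero]; exact Submodule.zero_mem _
    have hzsE : ∀ x ∈ zs, x ∈ E := fun x hx => hE x (List.mem_cons_of_mem _ hx)
    have ihm := ih hzsE
    have ihu : (Kop y y' (barSym zs) : BarChain G k) ∈ SymOn (k := k) Set.univ :=
      symOn_mono (by intro m _; trivial) ihm
    rw [Kop_rec_aux hy hy' h1 ihu]
    refine Submodule.add_mem _ ?_ ?_
    · have hJ := J_mem_full (k := k) y' E (z::zs) hE
      refine symOn_mono ?_ (consS_mem y hJ)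
      rintro _ ⟨m, hm, rfl⟩
      refine ⟨by simp, ?_⟩
      intro x hx
      rcases List.mem_cons.1 hx with h | h
      · exact h ▸ Set.mem_insert _ _
      · exact Set.mem_insert_iff.2 (Or.inr (hm.2 x h))
    · refine symOn_mono ?_ (consS_mem z ihm)
      rintro _ ⟨m, hm, rfl⟩
      refine ⟨by simp, ?_⟩
      intro x hx
      rcases List.mem_cons.1 hx with h | h
      · exact h ▸ Set.mem_insert_iff.2 (Or.inr (Set.mem_insert_iff.2
          (Or.inr (hE z (List.mem_cons_self)))))
      · exact hm.2 x h

lemma Kop_mem_univ' {y y' : G} (hy : y ≠ 1) (hy' : y' ≠ 1) (n : List G) :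
    (Kop y y' (barSym n) : BarChain G k) ∈ SymOn (k := k) Set.univ :=
  symOn_mono (by intro m _; trivial)
    (Kop_mem_full hy hy' Set.univ n (fun _ _ => trivial))

lemma Kop_mem_ne {y y' : G} (hy : y ≠ 1) (hy' : y' ≠ 1) (n : List G) :
    (Kop y y' (barSym n) : BarChain G k) ∈ SymOn (k := k) {m : List G | m ≠ []} :=
  symOn_mono (by intro m hm; exact hm.1)
    (Kop_mem_full hy hy' Set.univ n (fun _ _ => trivial))

lemma Kop_rec {y y' : G} (hy : y ≠ 1) (hy' : y' ≠ 1) (z : G) (zs : List G) :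
    (Kop y y' (barSym (z::zs)) : BarChain G k)
      = consS y (J y' (barSym (z::zs))) + consS z (Kop y y' (barSym zs)) := by
  by_cases h1 : (1:G) ∈ z::zs
  · rcases List.mem_cons.1 h1 with h | h
    · subst h
      rw [barSym_of_mem _ (List.mem_cons_self), map_zero, map_zero,
        consS_one (Kop_mem_univ' hy hy' zs)]
      simp
    · rw [barSym_of_mem _ (List.mem_cons_of_mem _ h), barSym_of_mem _ h]
      simp
  · exact Kop_rec_aux hy hy' h1 (Kop_mem_univ' hy hy' zs)

lemma Kop_rec_E {y y' : G} (hy : y ≠ 1) (hy' : y' ≠ 1) (z : G) {u : BarChain G k}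
    (hu : u ∈ SymOn (k := k) Set.univ) :
    Kop y y' (consS z u) = consS y (J y' (consS z u)) + consS z (Kop y y' u) := by
  have := symOn_ext ((Kop y y').comp (consS z))
    ((consS y).comp ((J y').comp (consS z)) + (consS z).comp (Kop y y'))
    (fun n _ => by
      simp only [LinearMap.comp_apply, LinearMap.add_apply]
      rw [consS_barSym, Kop_rec hy hy']) hu
  simpa using this

lemma barD_cons_expand {z w : G} {ws : List G} (hzs : (1:G) ∉ w::ws) :
    (barD (barSym (z::w::ws)) : BarChain G k)
      = barSym (w::ws) - barSym ((z*w)::ws) + barSym (z::ws)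
        - consS z (barD (barSym (w::ws))) := by
  rw [← consS_barSym z (w::ws), O1 z (by simp)]
  rw [barNorm_eq_self (mem_univ_barSym _), tlS_barSym _ hzs, List.tail_cons,
    fuS_barSym _ _ hzs, mergeAt_cons_zero, consS_barSym]


lemma barDList_triple (a b c : G) :
    (barDList [a, b, c] : BarChain G k)
      = barSym [b, c] - barSym [a*b, c] + barSym [a, b*c] - barSym [a, b] := by
  simp [barDList, mergeAt, Finset.sum_range_succ, pow_succ]
  abel

lemma L2 (y y' : G) : ∀ (m : List G), (∀ z ∈ m, z * y = y * z) →
    (∀ z ∈ m, z * y' = y' * z) →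
    (barD (Kop y y' (barSym m)) : BarChain G k)
      = J y (barSym m) + J y' (barSym m) - J (y*y') (barSym m)
        + Kop y y' (barD (barSym m)) := by
  by_cases hy : y = 1
  · subst hy
    intro m _ _
    have hK : (Kop (1:G) y' : BarChain G k →ₗ[k] BarChain G k) = 0 := by
      unfold Kop
      rw [barSym_of_mem _ (List.mem_cons_self), map_zero]
    rw [hK, J_one (G := G) (k := k), one_mul]
    simp
  by_cases hy' : y' = 1
  · subst hy'
    intro m _ _
    have hK : (Kop y (1:G) : BarChain G k →ₗ[k] BarChain G k) = 0 := by
      unfold Kop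
      rw [barSym_of_mem _ (List.mem_cons_of_mem _ (List.mem_singleton_self _)), map_zero]
    rw [hK, J_one (G := G) (k := k), mul_one]
    simp
  intro m
  induction m with
  | nil =>
    intro _ _
    rw [Kop_nil hy hy', barD_barSym _ (pair_not_mem hy hy'), barDList_pair,
      J_nil, J_nil, J_nil, barD_barSym ([] : List G) (by simp), barDList_nil, map_zero]
    abel
  | cons z zs ih =>
    intro hcy hcy'
    by_cases h1 : (1:G) ∈ z::zs
    · rw [barSym_of_mem _ h1]; simp
    have hz : z ≠ 1 := fun h => h1 (by rw [h]; exact List.mem_cons_self)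
    have hzs : (1:G) ∉ zs := fun h => h1 (List.mem_cons_of_mem _ h)
    have hzy : z * y = y * z := hcy z (List.mem_cons_self)
    have hzy' : z * y' = y' * z := hcy' z (List.mem_cons_self)
    cases zs with
    | nil =>
      have n1 : (1:G) ∉ [y', z] := by
        intro h
        rcases List.mem_cons.1 h with h | h
        · exact hy' h.symm
        · exact hz ((List.mem_singleton.1 h).symm)
      have n2 : (1:G) ∉ [z, y'] := by
        intro h
        rcases List.mem_cons.1 h with h | h
        · exact hz h.symm
        · exact hy' ((List.mem_singleton.1 h).symm)
      have eJ : (J y' (barSym [z]) : BarChain G k) = barSym [y', z] - barSym [z, y'] := by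
        rw [J_rec, J_nil, consS_barSym, consS_barSym]
      rw [Kop_rec hy hy', Kop_nil hy hy', eJ]
      rw [map_sub, consS_barSym, consS_barSym, consS_barSym]
      rw [map_add, map_sub]
      have d1 : (1:G) ∉ [y, y', z] := by
        intro h
        rcases List.mem_cons.1 h with h | h
        · exact hy h.symm
        · exact n1 h
      have d2 : (1:G) ∉ [y, z, y'] := by
        intro h
        rcases List.mem_cons.1 h with h | h
        · exact hy h.symm
        · exact n2 h
      have d3 : (1:G) ∉ [z, y, y'] := by
        intro h
        rcases List.mem_cons.1 h with h | h
        · exact hz h.symm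
        · exact pair_not_mem hy hy' h
      rw [barD_barSym _ d1, barD_barSym _ d2, barD_barSym _ d3,
        barDList_triple, barDList_triple, barDList_triple]
      have eJy : (J y (barSym [z]) : BarChain G k) = barSym [y, z] - barSym [z, y] := by
        rw [J_rec, J_nil, consS_barSym, consS_barSym]
      have eJyy : (J (y*y') (barSym [z]) : BarChain G k)
          = barSym [y*y', z] - barSym [z, y*y'] := by
        rw [J_rec, J_nil, consS_barSym, consS_barSym]
      rw [eJy, eJyy, barD_barSym _ (not_one_mem_singleton hz), barDList_one, map_zero]
      rw [hzy, hzy']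
      abel
    | cons w ws =>
      have hw : w ≠ 1 := fun h => hzs (by rw [h]; exact List.mem_cons_self)
      have ihe := ih (fun u hu => hcy u (List.mem_cons_of_mem _ hu))
        (fun u hu => hcy' u (List.mem_cons_of_mem _ hu))
      have hDzs_mem : (barD (barSym (w::ws)) : BarChain G k) ∈ SymOn (k := k) Set.univ := by
        rw [barD_barSym _ hzs]; exact barDList_mem _
      have l1m := L1 (k := k) y' (z::w::ws) hcy'
      rw [Kop_rec hy hy', map_add, O1E y (J_mem_ne y' (z::w::ws)),
        O1E z (Kop_mem_ne hy hy' (w::ws)), l1m, ihe, barD_cons_expand hzs,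
        barNorm_eq_self (J_mem_univ' y' _), barNorm_eq_self (Kop_mem_univ' hy hy' _)]
      simp only [map_sub, map_add, map_neg]
      rw [J_rec y' z (w::ws), J_rec y z (w::ws), J_rec (y*y') z (w::ws),
        Kop_rec hy hy' w ws]
      simp only [map_sub, map_add, map_neg]
      rw [fuS_consS hy' y (mem_univ_barSym (z::w::ws)),
        fuS_consS hz y (J_mem_univ' y' (w::ws)),
        tlS_consS hy' (mem_univ_barSym (z::w::ws)),
        tlS_consS hz (J_mem_univ' y' (w::ws)),
        fuS_consS hy z (J_mem_univ' y' (w::ws)),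
        fuS_consS hw z (Kop_mem_univ' hy hy' ws),
        tlS_consS hy (J_mem_univ' y' (w::ws)),
        tlS_consS hw (Kop_mem_univ' hy hy' ws),
        Kop_rec hy hy' (z*w) ws, Kop_rec hy hy' z ws,
        Kop_rec_E hy hy' z hDzs_mem,
        J_rec y' (z*w) ws, J_rec y' z ws, J_rec_E y' z hDzs_mem]
      simp only [map_sub, map_add, map_neg]
      simp only [consS_barSym]
      rw [hzy]
      abel


lemma L2E (y y' : G) {u : BarChain G k}
    (hu : u ∈ SymOn (k := k) {m : List G | ∀ z ∈ m, z * y = y * z ∧ z * y' = y' * z}) :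
    barD (Kop y y' u) = J y u + J y' u - J (y*y') u + Kop y y' (barD u) := by
  have h0 := symOn_ext (barD.comp (Kop y y') + J (y*y'))
    ((J y + J y') + (Kop y y').comp barD)
    (fun n hn => by
      simp only [LinearMap.comp_apply, LinearMap.add_apply]
      rw [L2 y y' n (fun z hz => (hn z hz).1) (fun z hz => (hn z hz).2)]
      abel) hu
  simp only [LinearMap.comp_apply, LinearMap.add_apply] at h0
  have := eq_sub_of_add_eq h0
  rw [this]
  abel

lemma AC (y y' : G) : ∀ (n : List G),
    (J y (J y' (barSym n)) : BarChain G k) + J y' (J y (barSym n)) = 0 := by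
  by_cases hy : y = 1
  · subst hy
    intro n
    rw [J_one (G := G) (k := k)]
    simp
  by_cases hy' : y' = 1
  · subst hy'
    intro n
    rw [J_one (G := G) (k := k)]
    simp
  intro n
  induction n with
  | nil =>
    rw [J_nil, J_nil, J_rec y y' [], J_rec y' y [], J_nil, J_nil]
    simp only [consS_barSym]
    abel
  | cons z zs ih =>
    rw [J_rec y' z zs, J_rec y z zs]
    simp only [map_sub]
    rw [J_rec_E y y' (mem_univ_barSym (z::zs)), J_rec_E y' y (mem_univ_barSym (z::zs)),
      J_rec_E y z (J_mem_univ' y' zs), J_rec_E y' z (J_mem_univ' y zs)]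
    rw [J_rec y z zs, J_rec y' z zs]
    simp only [map_sub]
    rw [eq_neg_of_add_eq_zero_left ih]
    simp only [map_neg]
    abel

lemma AC_E (y y' : G) {u : BarChain G k} (hu : u ∈ SymOn (k := k) Set.univ) :
    (J y (J y' u) : BarChain G k) + J y' (J y u) = 0 := by
  have h0 := symOn_ext ((J y).comp (J y') + (J y').comp (J y)) 0
    (fun n _ => by
      simp only [LinearMap.comp_apply, LinearMap.add_apply, LinearMap.zero_apply]
      exact AC y y' n) hu
  simpa using h0


lemma J_map_mem (g : G) {E : Set G} {u : BarChain G k}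
    (hu : u ∈ SymOn (k := k) {m | ∀ z ∈ m, z ∈ E}) :
    J g u ∈ SymOn (k := k) {m | ∀ z ∈ m, z ∈ insert g E} :=
  symOn_map_le _ (fun n hn => symOn_mono (fun m hm => hm.2) (J_mem_full g E n hn)) hu

lemma Kop_map_mem {y y' : G} {E : Set G} {u : BarChain G k}
    (hu : u ∈ SymOn (k := k) {m | ∀ z ∈ m, z ∈ E}) :
    Kop y y' u ∈ SymOn (k := k) {m | ∀ z ∈ m, z ∈ insert y (insert y' E)} := by
  by_cases hy : y = 1
  · subst hy
    have hK : (Kop (1:G) y' : BarChain G k →ₗ[k] BarChain G k) = 0 := by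
      unfold Kop
      rw [barSym_of_mem _ (List.mem_cons_self), map_zero]
    rw [hK]
    exact Submodule.zero_mem _
  by_cases hy' : y' = 1
  · subst hy'
    have hK : (Kop y (1:G) : BarChain G k →ₗ[k] BarChain G k) = 0 := by
      unfold Kop
      rw [barSym_of_mem _ (List.mem_cons_of_mem _ (List.mem_singleton_self _)), map_zero]
    rw [hK]
    exact Submodule.zero_mem _
  exact symOn_map_le _
    (fun n hn => symOn_mono (fun m hm => hm.2) (Kop_mem_full hy hy' E n hn)) hu

lemma wedge_mem : ∀ (l : List G),
    (wedgeList l : BarChain G k) ∈ SymOn (k := k) {m | ∀ z ∈ m, z ∈ l} := by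
  intro l
  induction l with
  | nil =>
    refine barSym_mem_symOn (S := {m | ∀ z ∈ m, z ∈ ([] : List G)}) (n := []) ?_
    intro z hz
    cases hz
  | cons x xs ih =>
    have h1 : (wedgeList (x::xs) : BarChain G k) = barNorm (J x (wedgeList xs)) := rfl
    have h2 : (J x (wedgeList xs) : BarChain G k)
        ∈ SymOn (k := k) {m | ∀ z ∈ m, z ∈ insert x {g | g ∈ xs}} := J_map_mem x ih
    rw [h1, barNorm_eq_self (symOn_mono (fun m _ => trivial) h2)]
    refine symOn_mono ?_ h2
    intro m hm z hz
    rcases Set.mem_insert_iff.1 (hm z hz) with h | h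
    · exact h ▸ List.mem_cons_self
    · exact List.mem_cons_of_mem _ h

lemma wedge_cons (x : G) (l : List G) :
    (wedgeList (x::l) : BarChain G k) = J x (wedgeList l) := by
  have h1 : (wedgeList (x::l) : BarChain G k) = barNorm (J x (wedgeList l)) := rfl
  rw [h1, barNorm_eq_self (symOn_mono (fun m _ => trivial) (J_map_mem x (wedge_mem l)))]

/-- iterated insertion operator -/
noncomputable def foldJ : List G → BarChain G k →ₗ[k] BarChain G k
  | [] => LinearMap.id
  | x :: xs => (J x).comp (foldJ xs)

lemma wedge_append (l1 l2' : List G) :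
    (wedgeList (l1 ++ l2') : BarChain G k) = foldJ l1 (wedgeList l2') := by
  induction l1 with
  | nil => rfl
  | cons x xs ih =>
    have h1 : (wedgeList ((x::xs) ++ l2') : BarChain G k)
        = J x (wedgeList (xs ++ l2')) := wedge_cons x (xs ++ l2')
    rw [h1, ih]
    rfl

lemma wedge_cycle (l : List G) (hc : ∀ a ∈ l, ∀ b ∈ l, a * b = b * a) :
    barD (wedgeList l : BarChain G k) = 0 := by
  induction l with
  | nil =>
    show barD (barSym [] : BarChain G k) = 0
    rw [barD_barSym ([] : List G) (by simp), barDList_nil]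
  | cons x xs ih =>
    have hmx : (wedgeList xs : BarChain G k)
        ∈ SymOn (k := k) {m | ∀ z ∈ m, z * x = x * z} :=
      symOn_mono (by
        intro m hm z hz
        exact hc z (List.mem_cons_of_mem _ (hm z hz)) x (List.mem_cons_self))
        (wedge_mem xs)
    rw [wedge_cons, L1E x hmx,
      ih (fun a ha b hb => hc a (List.mem_cons_of_mem _ ha) b (List.mem_cons_of_mem _ hb)),
      map_zero, neg_zero]

lemma foldJ_barD {E : Set G} (hEc : ∀ a ∈ E, ∀ b ∈ E, a * b = b * a) :
    ∀ (l1 : List G), (∀ x ∈ l1, x ∈ E) → ∀ {c : BarChain G k},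
      c ∈ SymOn (k := k) {m | ∀ z ∈ m, z ∈ E} →
      ∃ c', foldJ l1 (barD c) = barD c'
        ∧ c' ∈ SymOn (k := k) {m | ∀ z ∈ m, z ∈ E} := by
  intro l1
  induction l1 with
  | nil => exact fun _ c hc => ⟨c, rfl, hc⟩
  | cons x xs ih =>
    intro hx c hc
    obtain ⟨c', h1, h2⟩ := ih (fun u hu => hx u (List.mem_cons_of_mem _ hu)) hc
    have hcent : c' ∈ SymOn (k := k) {m | ∀ z ∈ m, z * x = x * z} :=
      symOn_mono (by
        intro m hm z hz
        exact hEc z (hm z hz) x (hx x (List.mem_cons_self))) h2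
    refine ⟨-(J x c'), ?_, ?_⟩
    · have h3 : foldJ (x::xs) (barD c) = J x (foldJ xs (barD c)) := rfl
      rw [h3, h1, map_neg, L1E x hcent, neg_neg]
    · refine Submodule.neg_mem _ ?_
      refine symOn_mono ?_ (J_map_mem x h2)
      intro m hm z hz
      rcases Set.mem_insert_iff.1 (hm z hz) with h | h
      · exact h ▸ hx x (List.mem_cons_self)
      · exact h

theorem auxStmt3 {G : Type*} [Group G] {k : Type*} [CommRing k] :
    (∀ l : List G, (∀ a ∈ l, ∀ b ∈ l, a * b = b * a) →
      barD (wedgeList l : BarChain G k) = 0) ∧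
    (∀ (l1 l2 : List G) (y y' : G),
      (∀ a ∈ l1 ++ [y, y'] ++ l2, ∀ b ∈ l1 ++ [y, y'] ++ l2, a * b = b * a) →
      ∃ c : BarChain G k,
        wedgeList (l1 ++ [y * y'] ++ l2)
          - (wedgeList (l1 ++ [y] ++ l2) + wedgeList (l1 ++ [y'] ++ l2)) = barD c) ∧
    (∀ (l1 l2 : List G) (y y' : G),
      (∀ a ∈ l1 ++ [y, y'] ++ l2, ∀ b ∈ l1 ++ [y, y'] ++ l2, a * b = b * a) →
      ∃ c : BarChain G k,
        wedgeList (l1 ++ [y, y'] ++ l2) + wedgeList (l1 ++ [y', y] ++ l2) = barD c) := by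
  refine ⟨fun l hc => wedge_cycle l hc, ?_, ?_⟩
  · intro l1 l2 y y' hcomm
    set L := l1 ++ [y, y'] ++ l2 with hL
    have hyE : y ∈ L := by simp [hL]
    have hy'E : y' ∈ L := by simp [hL]
    have hl2E : ∀ g ∈ l2, g ∈ L := fun g hg => by simp [hL, hg]
    have hl1E : ∀ g ∈ l1, g ∈ L := fun g hg => by simp [hL, hg]
    have hEc : ∀ a ∈ {g : G | g ∈ L}, ∀ b ∈ {g : G | g ∈ L}, a * b = b * a := hcomm
    have hwmem : (wedgeList l2 : BarChain G k)
        ∈ SymOn (k := k) {m | ∀ z ∈ m, z ∈ {g : G | g ∈ L}} :=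
      symOn_mono (by intro m hm z hz; exact hl2E z (hm z hz)) (wedge_mem l2)
    have hwcyc : barD (wedgeList l2 : BarChain G k) = 0 :=
      wedge_cycle l2 (fun a ha b hb => hcomm a (hl2E a ha) b (hl2E b hb))
    have hwmem2 : (wedgeList l2 : BarChain G k)
        ∈ SymOn (k := k) {m | ∀ z ∈ m, z * y = y * z ∧ z * y' = y' * z} := by
      refine symOn_mono ?_ hwmem
      intro m hm z hz
      exact ⟨hEc z (hm z hz) y hyE, hEc z (hm z hz) y' hy'E⟩
    have hKmem : (Kop y y' (wedgeList l2) : BarChain G k)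
        ∈ SymOn (k := k) {m | ∀ z ∈ m, z ∈ {g : G | g ∈ L}} := by
      refine symOn_mono ?_ (Kop_map_mem hwmem)
      intro m hm z hz
      rcases Set.mem_insert_iff.1 (hm z hz) with h | h
      · exact h ▸ hyE
      · rcases Set.mem_insert_iff.1 h with h' | h'
        · exact h' ▸ hy'E
        · exact h'
    have base : (wedgeList (y*y' :: l2) : BarChain G k)
        - (wedgeList (y :: l2) + wedgeList (y' :: l2))
          = barD (-(Kop y y' (wedgeList l2))) := by
      rw [wedge_cons, wedge_cons, wedge_cons, map_neg, L2E y y' hwmem2, hwcyc, map_zero,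
        add_zero]
      abel
    obtain ⟨c', hc', _⟩ := foldJ_barD hEc l1 hl1E (Submodule.neg_mem _ hKmem)
    refine ⟨c', ?_⟩
    have e1 : (wedgeList (l1 ++ [y*y'] ++ l2) : BarChain G k)
        = foldJ l1 (wedgeList (y*y' :: l2)) := by
      rw [List.append_assoc]
      exact wedge_append l1 (y*y' :: l2)
    have e2 : (wedgeList (l1 ++ [y] ++ l2) : BarChain G k)
        = foldJ l1 (wedgeList (y :: l2)) := by
      rw [List.append_assoc]
      exact wedge_append l1 (y :: l2)
    have e3 : (wedgeList (l1 ++ [y'] ++ l2) : BarChain G k)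
        = foldJ l1 (wedgeList (y' :: l2)) := by
      rw [List.append_assoc]
      exact wedge_append l1 (y' :: l2)
    rw [e1, e2, e3, ← map_add (foldJ (k := k) l1), ← map_sub (foldJ (k := k) l1), base, hc']
  · intro l1 l2 y y' _
    refine ⟨0, ?_⟩
    rw [map_zero]
    have e1 : (wedgeList (l1 ++ [y, y'] ++ l2) : BarChain G k)
        = foldJ l1 (J y (J y' (wedgeList l2))) :=
      calc (wedgeList (l1 ++ [y, y'] ++ l2) : BarChain G k)
          = foldJ l1 (wedgeList (y :: y' :: l2)) := by
            rw [List.append_assoc]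
            exact wedge_append l1 (y :: y' :: l2)
        _ = foldJ l1 (J y (J y' (wedgeList l2))) := by rw [wedge_cons, wedge_cons]
    have e2 : (wedgeList (l1 ++ [y', y] ++ l2) : BarChain G k)
        = foldJ l1 (J y' (J y (wedgeList l2))) :=
      calc (wedgeList (l1 ++ [y', y] ++ l2) : BarChain G k)
          = foldJ l1 (wedgeList (y' :: y :: l2)) := by
            rw [List.append_assoc]
            exact wedge_append l1 (y' :: y :: l2)
        _ = foldJ l1 (J y' (J y (wedgeList l2))) := by rw [wedge_cons, wedge_cons]
    rw [e1, e2, ← map_add (foldJ l1),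
      AC_E y y' (symOn_mono (fun m _ => trivial) (wedge_mem l2)), map_zero]

end Aux


/-- for pairwise commuting `x₁,...,x_i`, the chain
`⟨x₁,...,x_i⟩ = [x₁] ∧ ... ∧ [x_i]` is a cycle, and the homology class it
represents is multilinear and skew-symmetric in the entries (equalities in
homology are expressed as "the difference is a boundary"). -/
theorem stmt3 {G : Type*} [Group G] {k : Type*} [CommRing k] :
    (∀ l : List G, (∀ a ∈ l, ∀ b ∈ l, a * b = b * a) →
      barD (wedgeList l : BarChain G k) = 0) ∧
    (∀ (l1 l2 : List G) (y y' : G),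
      (∀ a ∈ l1 ++ [y, y'] ++ l2, ∀ b ∈ l1 ++ [y, y'] ++ l2, a * b = b * a) →
      ∃ c : BarChain G k,
        wedgeList (l1 ++ [y * y'] ++ l2)
          - (wedgeList (l1 ++ [y] ++ l2) + wedgeList (l1 ++ [y'] ++ l2)) = barD c) ∧
    (∀ (l1 l2 : List G) (y y' : G),
      (∀ a ∈ l1 ++ [y, y'] ++ l2, ∀ b ∈ l1 ++ [y, y'] ++ l2, a * b = b * a) →
      ∃ c : BarChain G k,
        wedgeList (l1 ++ [y, y'] ++ l2) + wedgeList (l1 ++ [y', y] ++ l2) = barD c) := by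
  exact auxStmt3
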